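/- arXiv:1910.13044 — 2 statements merged into one kernel-verified Lean document; each statement's English description precedes it below -/
import Mathlib

section
/- Let G be a finitely generated (countable discrete) group. Then the index map C(G) → ℕ̄ sending a subgroup H to its index [G : H] (an element of ℕ if the index is finite, and ∞ otherwise) is continuous, where ℕ̄ = ℕ ∪ {∞} is the one-point compactification of ℕ. -/
open OnePoint

/-- The Chabauty space of a topological group `G`: the set of closed subgroups of `G`. -/
def ChabautySpace (G : Type*) [Group G] [TopologicalSpace G] : Type _ :=
  {H : Subgroup G // IsClosed (H : Set G)}

/-- The Chabauty topology on the space of closed subgroups, generated by the sets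
`O_K = {H | H ∩ K = ∅}` for `K` compact and `O'_U = {H | H ∩ U ≠ ∅}` for `U` open. -/
instance ChabautySpace.instTopologicalSpace (G : Type*) [Group G] [TopologicalSpace G] :
    TopologicalSpace (ChabautySpace G) :=
  TopologicalSpace.generateFrom
    ({S | ∃ K : Set G, IsCompact K ∧ S = {H : ChabautySpace G | (H.1 : Set G) ∩ K = ∅}} ∪
     {S | ∃ U : Set G, IsOpen U ∧ S = {H : ChabautySpace G | ((H.1 : Set G) ∩ U).Nonempty}})

section Aux

variable {G : Type*} [Group G] [TopologicalSpace G]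

/-- The set of subgroups containing a given element is open (discrete case). -/
lemma ChabautySpace.isOpen_mem [DiscreteTopology G] (g : G) :
    IsOpen {H : ChabautySpace G | g ∈ H.1} := by
  have h : {H : ChabautySpace G | g ∈ H.1}
      = {H : ChabautySpace G | ((H.1 : Set G) ∩ ({g} : Set G)).Nonempty} := by
    ext H
    simp [Set.Nonempty, Set.mem_inter_iff]
  rw [h]
  exact TopologicalSpace.GenerateOpen.basic _ (Or.inr ⟨{g}, isOpen_discrete _, rfl⟩)

/-- The set of subgroups avoiding a given finite set is open. -/
lemma ChabautySpace.isOpen_avoid (K : Set G) (hK : K.Finite) :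
    IsOpen {H : ChabautySpace G | (H.1 : Set G) ∩ K = ∅} :=
  TopologicalSpace.GenerateOpen.basic _ (Or.inl ⟨K, hK.isCompact, rfl⟩)

lemma exists_inj_fin (α : Type*) [Nonempty α] (N : ℕ)
    (h : Nat.card α = 0 ∨ N < Nat.card α) :
    ∃ f : Fin (N + 1) → α, Function.Injective f := by
  rcases finite_or_infinite α with hf | hi
  · have hne : Nat.card α ≠ 0 := Nat.card_ne_zero.mpr ⟨‹_›, ‹_›⟩
    have hlt : N < Nat.card α := h.resolve_left hne
    haveI := Fintype.ofFinite α
    rw [Nat.card_eq_fintype_card] at hlt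
    have hcard : Fintype.card (Fin (N + 1)) ≤ Fintype.card α := by simpa using hlt
    obtain ⟨f⟩ := Function.Embedding.nonempty_of_card_le hcard
    exact ⟨f, f.injective⟩
  · let e := Infinite.natEmbedding α
    exact ⟨fun i => e i, fun i j hij => Fin.val_injective (e.injective hij)⟩

/-- For `n ≠ 0`, the set of subgroups of index exactly `n` is open in the
Chabauty topology on a finitely generated discrete group. -/
lemma ChabautySpace.isOpen_index_eq [DiscreteTopology G] [Group.FG G] (n : ℕ) (hn : n ≠ 0) :
    IsOpen {H : ChabautySpace G | H.1.index = n} := by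
  rw [isOpen_iff_forall_mem_open]
  intro H hH
  simp only [Set.mem_setOf_eq] at hH
  haveI : H.1.FiniteIndex := ⟨by rw [hH]; exact hn⟩
  have hfg : H.1.FG := (Group.fg_iff_subgroup_fg H.1).mp inferInstance
  obtain ⟨S, hSclo, hSfin⟩ := (Subgroup.fg_iff H.1).mp hfg
  haveI : Finite (G ⧸ H.1) := Subgroup.finite_quotient_of_finiteIndex
  set K : Set G :=
    (fun p : (G ⧸ H.1) × (G ⧸ H.1) => (Quotient.out p.1)⁻¹ * Quotient.out p.2) ''
      {p | p.1 ≠ p.2} with hKdef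
  have hKfin : K.Finite := (Set.toFinite _).image _
  refine ⟨(⋂ s ∈ S, {H' : ChabautySpace G | s ∈ H'.1}) ∩
      {H' : ChabautySpace G | (H'.1 : Set G) ∩ K = ∅}, ?_, ?_, ?_, ?_⟩
  · -- the neighborhood is contained in the level set
    rintro H' ⟨hmem, havoid⟩
    simp only [Set.mem_iInter, Set.mem_setOf_eq] at hmem havoid ⊢
    have hle : H.1 ≤ H'.1 := by
      rw [← hSclo]
      exact (Subgroup.closure_le _).mpr fun s hs => hmem s hs
    have hdvd : H'.1.index ∣ n := hH ▸ Subgroup.index_dvd_of_le hle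
    have hne : H'.1.index ≠ 0 := fun h0 => hn (by simpa [h0, zero_dvd_iff] using hdvd)
    haveI : Finite (G ⧸ H'.1) := by
      apply Nat.finite_of_card_ne_zero
      rwa [← Subgroup.index_eq_card]
    have hinj : Function.Injective
        (fun q : G ⧸ H.1 => (QuotientGroup.mk (Quotient.out q) : G ⧸ H'.1)) := by
      intro q r hqr
      by_contra hne'
      have hx : (Quotient.out q)⁻¹ * Quotient.out r ∈ H'.1 := QuotientGroup.eq.mp hqr
      have hxK : (Quotient.out q)⁻¹ * Quotient.out r ∈ K := ⟨(q, r), hne', rfl⟩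
      exact (Set.eq_empty_iff_forall_notMem.mp havoid _) ⟨hx, hxK⟩
    have hle' : n ≤ H'.1.index := by
      have := Nat.card_le_card_of_injective _ hinj
      rwa [← Subgroup.index_eq_card, ← Subgroup.index_eq_card, hH] at this
    exact le_antisymm (Nat.le_of_dvd (Nat.pos_of_ne_zero hn) hdvd) hle'
  · exact IsOpen.inter (hSfin.isOpen_biInter fun s _ => ChabautySpace.isOpen_mem s)
      (ChabautySpace.isOpen_avoid K hKfin)
  · -- H belongs to the first part
    simp only [Set.mem_iInter, Set.mem_setOf_eq]
    intro s hs
    rw [← hSclo]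
    exact Subgroup.subset_closure hs
  · -- H belongs to the second part
    simp only [Set.mem_setOf_eq]
    rw [Set.eq_empty_iff_forall_notMem]
    rintro x ⟨hxH, ⟨p, hp, rfl⟩⟩
    exact hp (((QuotientGroup.out_eq' p.1).symm.trans
      (QuotientGroup.eq.mpr hxH)).trans (QuotientGroup.out_eq' p.2))

/-- The set of subgroups of infinite index or index `> N` is open. -/
lemma ChabautySpace.isOpen_index_gt [DiscreteTopology G] (N : ℕ) :
    IsOpen {H : ChabautySpace G | H.1.index = 0 ∨ N < H.1.index} := by
  rw [isOpen_iff_forall_mem_open]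
  intro H hH
  simp only [Set.mem_setOf_eq] at hH
  obtain ⟨f, hf⟩ := exists_inj_fin (G ⧸ H.1) N (by rwa [← Subgroup.index_eq_card])
  set K : Set G :=
    (fun p : Fin (N + 1) × Fin (N + 1) =>
      (Quotient.out (f p.1))⁻¹ * Quotient.out (f p.2)) '' {p | p.1 ≠ p.2} with hKdef
  have hKfin : K.Finite := (Set.toFinite _).image _
  refine ⟨{H' : ChabautySpace G | (H'.1 : Set G) ∩ K = ∅}, ?_,
    ChabautySpace.isOpen_avoid K hKfin, ?_⟩
  · intro H' havoid
    simp only [Set.mem_setOf_eq] at havoid ⊢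
    by_contra hcon
    push_neg at hcon
    obtain ⟨hne, hleN⟩ := hcon
    haveI : Finite (G ⧸ H'.1) := by
      apply Nat.finite_of_card_ne_zero
      rwa [← Subgroup.index_eq_card]
    have hinj : Function.Injective
        (fun i : Fin (N + 1) => (QuotientGroup.mk (Quotient.out (f i)) : G ⧸ H'.1)) := by
      intro i j hij
      by_contra hne'
      have hij' : f i ≠ f j := fun h => hne' (hf.eq_iff.mp h)
      have hne'' : i ≠ j := fun h => hij' (by rw [h])
      have hx : (Quotient.out (f i))⁻¹ * Quotient.out (f j) ∈ H'.1 := QuotientGroup.eq.mp hij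
      have hxK : (Quotient.out (f i))⁻¹ * Quotient.out (f j) ∈ K := ⟨(i, j), hne'', rfl⟩
      exact (Set.eq_empty_iff_forall_notMem.mp havoid _) ⟨hx, hxK⟩
    have : N + 1 ≤ H'.1.index := by
      have := Nat.card_le_card_of_injective _ hinj
      rwa [Nat.card_eq_fintype_card, Fintype.card_fin, ← Subgroup.index_eq_card] at this
    omega
  · simp only [Set.mem_setOf_eq]
    rw [Set.eq_empty_iff_forall_notMem]
    rintro x ⟨hxH, ⟨p, hp, rfl⟩⟩
    apply hp
    apply hf
    exact ((QuotientGroup.out_eq' (f p.1)).symm.trans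
      (QuotientGroup.eq.mpr hxH)).trans (QuotientGroup.out_eq' (f p.2))

end Aux

/-- For a finitely generated (countable discrete) group `G`, the index map
`C(G) → ℕ̄ = ℕ ∪ {∞}`, sending `H` to `[G:H]` if finite and to `∞` otherwise,
is continuous (recall `Subgroup.index H = 0` encodes infinite index). -/
theorem chabauty_index_continuous
    (G : Type*) [Group G] [TopologicalSpace G] [DiscreteTopology G] [Countable G]
    [Group.FG G] :
    Continuous (fun H : ChabautySpace G =>
      if H.1.index = 0 then (∞ : OnePoint ℕ) else (H.1.index : OnePoint ℕ)) := by
  rw [continuous_def]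
  intro U hU
  rw [isOpen_iff_forall_mem_open]
  intro H hH
  simp only [Set.mem_preimage] at hH
  by_cases h0 : H.1.index = 0
  · rw [if_pos h0] at hH
    obtain ⟨-, hcpt⟩ := (OnePoint.isOpen_iff_of_mem hH).mp hU
    have hfin : ((((↑) : ℕ → OnePoint ℕ)) ⁻¹' U)ᶜ.Finite := hcpt.finite_of_discrete
    set N : ℕ := hfin.toFinset.sup id with hNdef
    have hbig : ∀ m : ℕ, N < m → (m : OnePoint ℕ) ∈ U := by
      intro m hm
      by_contra hmem
      have : m ∈ ((((↑) : ℕ → OnePoint ℕ)) ⁻¹' U)ᶜ := hmem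
      have : m ≤ N := Finset.le_sup (f := id) (hfin.mem_toFinset.mpr this)
      omega
    refine ⟨{H' : ChabautySpace G | H'.1.index = 0 ∨ N < H'.1.index}, ?_,
      ChabautySpace.isOpen_index_gt N, Or.inl h0⟩
    intro H' hH'
    simp only [Set.mem_setOf_eq] at hH'
    simp only [Set.mem_preimage]
    rcases hH' with h | h
    · rwa [if_pos h]
    · rw [if_neg (by omega)]
      exact hbig _ h
  · rw [if_neg h0] at hH
    refine ⟨{H' : ChabautySpace G | H'.1.index = H.1.index}, ?_,
      ChabautySpace.isOpen_index_eq _ h0, rfl⟩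
    intro H' hH'
    simp only [Set.mem_setOf_eq] at hH'
    simp only [Set.mem_preimage, hH', if_neg h0]
    exact hH
end

section
/- Let p be a prime, k ≥ 1, and G_{p,k} = C_{p^∞} × C_k × 𝕋, where C_{p^∞} is the Prüfer p-group with the discrete topology, C_k is the cyclic group of order k with the discrete topology, and 𝕋 is the circle group. Then every closed subgroup of G_{p,k} that is not discrete is of the form D × 𝕋 for some subgroup D of C_{p^∞} × C_k. Moreover, the set of such subgroups is closed in the Chabauty space C(G_{p,k}) and is homeomorphic to C(C_{p^∞} × C_k) via the map sending a subgroup D of C_{p^∞} × C_k to its preimage D × 𝕋 under the projection π : G_{p,k} → C_{p^∞} × C_k. -/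
/-- The subgroup `C_n` of `n`-th roots of unity in the circle group `𝕋`. -/
noncomputable def circleRoots (n : ℕ) : Subgroup Circle where
  carrier := {z | z ^ n = 1}
  one_mem' := one_pow n
  mul_mem' := by
    intro a b ha hb
    simp only [Set.mem_setOf_eq] at *
    rw [mul_pow, ha, hb, mul_one]
  inv_mem' := by
    intro a ha
    simp only [Set.mem_setOf_eq] at *
    rw [inv_pow, ha, inv_one]

/-- The subgroup of all `p`-power roots of unity in the circle group `𝕋`. -/
noncomputable def pruferSubgroup (p : ℕ) : Subgroup Circle where
  carrier := {z | ∃ ℓ : ℕ, z ^ p ^ ℓ = 1}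
  one_mem' := ⟨0, one_pow _⟩
  mul_mem' := by
    rintro a b ⟨la, ha⟩ ⟨lb, hb⟩
    refine ⟨la + lb, ?_⟩
    rw [mul_pow, pow_add, pow_mul, ha, one_pow, mul_comm (p ^ la), pow_mul, hb, one_pow,
      one_mul]
  inv_mem' := by
    rintro a ⟨l, h⟩
    exact ⟨l, by rw [inv_pow, h, inv_one]⟩

/-- The Prüfer `p`-group `C_{p^∞}`: the group of all `p`-power roots of unity in `𝕋`,
endowed with the *discrete* topology. -/
def Prufer (p : ℕ) : Type := ↥(pruferSubgroup p)

noncomputable instance (p : ℕ) : CommGroup (Prufer p) := inferInstanceAs (CommGroup ↥(pruferSubgroup p))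

instance (p : ℕ) : TopologicalSpace (Prufer p) := ⊥

instance (p : ℕ) : DiscreteTopology (Prufer p) := ⟨rfl⟩

instance (p : ℕ) : IsTopologicalGroup (Prufer p) where
  continuous_mul := continuous_of_discreteTopology
  continuous_inv := continuous_of_discreteTopology

open scoped Real

section ChabautyAuxLemmas

lemma chabAux_exp_zpow (q : ℤ) (x : ℝ) : Circle.exp (q * x) = Circle.exp x ^ q := by
  simpa [zsmul_eq_mul] using map_zsmul Circle.expHom q x

lemma chabAux_circle_proper_closed_finite (S : Subgroup Circle) (hS : IsClosed (S : Set Circle))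
    (hne : S ≠ ⊤) : (S : Set Circle).Finite := by
  set T : AddSubgroup ℝ :=
    { carrier := {x | Circle.exp x ∈ S}
      zero_mem' := by simpa [Circle.exp_zero] using S.one_mem
      add_mem' := fun ha hb => by simpa [Circle.exp_add] using S.mul_mem ha hb
      neg_mem' := fun ha => by simpa [Circle.exp_neg] using S.inv_mem ha } with hT
  have hTc : IsClosed (T : Set ℝ) := hS.preimage Circle.exp.continuous
  have hmemT : ∀ x : ℝ, x ∈ T ↔ Circle.exp x ∈ S := fun _ => Iff.rfl
  rcases T.dense_or_cyclic with hd | ⟨a, ha⟩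
  · exfalso; apply hne
    have htop : (T : Set ℝ) = Set.univ := by
      rw [← hTc.closure_eq]; exact hd.closure_eq
    ext z
    simp only [Subgroup.mem_top, iff_true]
    have : Complex.arg (z : ℂ) ∈ T := by rw [← SetLike.mem_coe, htop]; trivial
    simpa [Circle.exp_arg] using (hmemT _).1 this
  · -- T = closure {a}
    have h2pi : (2 * π) ∈ T := by rw [hmemT]; simpa using S.one_mem
    rw [ha, AddSubgroup.mem_closure_singleton] at h2pi
    obtain ⟨n, hn⟩ := h2pi
    have hn0 : n ≠ 0 := by
      rintro rfl; simp at hn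
    set N : ℕ := n.natAbs with hNdef
    have hN : 0 < N := Int.natAbs_pos.2 hn0
    set g : Circle := Circle.exp a with hg
    have hgn : g ^ n = 1 := by
      rw [hg, ← chabAux_exp_zpow]
      have : (n : ℝ) * a = 2 * π := by rw [← hn]; simp [zsmul_eq_mul]
      rw [this, Circle.exp_two_pi]
    have hgN : g ^ (N : ℤ) = 1 := by
      rcases Int.natAbs_eq n with h | h
      · rw [← h, hgn]
      · rw [show ((N : ℤ)) = -n by omega, zpow_neg, hgn, inv_one]
    apply Set.Finite.subset (Set.finite_range fun j : Fin N => g ^ (j : ℕ))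
    intro z hz
    have hzT : Complex.arg (z : ℂ) ∈ T := by rw [hmemT, Circle.exp_arg]; exact hz
    rw [ha, AddSubgroup.mem_closure_singleton] at hzT
    obtain ⟨m, hm⟩ := hzT
    have hzg : z = g ^ m := by
      rw [hg, ← chabAux_exp_zpow]
      have : (m : ℝ) * a = Complex.arg (z : ℂ) := by rw [← hm]; simp [zsmul_eq_mul]
      rw [this, Circle.exp_arg]
    set r : ℤ := m % N with hr
    have hr0 : 0 ≤ r := Int.emod_nonneg m (by exact_mod_cast hN.ne')
    have hrN : r < N := Int.emod_lt_of_pos m (by exact_mod_cast hN)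
    refine ⟨⟨r.toNat, by omega⟩, ?_⟩
    have : g ^ m = g ^ r := by
      conv_lhs => rw [show m = N * (m / N) + r from (Int.mul_ediv_add_emod m N).symm]
      rw [zpow_add, zpow_mul, hgN, one_zpow, one_mul]
    simp only [hzg, this]
    rw [← zpow_natCast, Int.toNat_of_nonneg hr0]

lemma chabAux_circle_coe_pow (z : Circle) (n : ℕ) : ((z ^ n : Circle) : ℂ) = (z : ℂ) ^ n :=
  map_pow Circle.coeHom z n

lemma chabAux_inter_preimage_nonempty {α β : Type*} (f : α → β) (T : Set β) (K : Set α) :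
    (f ⁻¹' T ∩ K).Nonempty ↔ (T ∩ f '' K).Nonempty := by
  constructor
  · rintro ⟨x, hx, hk⟩; exact ⟨f x, hx, x, hk, rfl⟩
  · rintro ⟨y, hy, x, hk, rfl⟩; exact ⟨x, hy, hk⟩

lemma chabAux_inter_preimage_empty {α β : Type*} (f : α → β) (T : Set β) (K : Set α) :
    f ⁻¹' T ∩ K = ∅ ↔ T ∩ f '' K = ∅ := by
  rw [← Set.not_nonempty_iff_eq_empty, ← Set.not_nonempty_iff_eq_empty,
    chabAux_inter_preimage_nonempty]

end ChabautyAuxLemmas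

lemma chabAux_finite_circleRoots (k : ℕ) (hk : 1 ≤ k) : Finite ↥(circleRoots k) := by
  have h1 : Set.Finite {w : ℂ | w ^ k = 1} := by
    apply Set.Finite.subset (Polynomial.nthRoots k (1 : ℂ)).toFinset.finite_toSet
    intro w hw
    rw [Finset.mem_coe, Multiset.mem_toFinset, Polynomial.mem_nthRoots (by omega : 0 < k)]
    exact hw
  have h2 : Set.Finite ((circleRoots k : Set Circle)) := by
    have heq : (circleRoots k : Set Circle) = (fun z : Circle => (z : ℂ)) ⁻¹' {w : ℂ | w ^ k = 1} := by
      ext z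
      simp only [Set.mem_preimage, Set.mem_setOf_eq, SetLike.mem_coe]
      constructor
      · intro hz
        have := congrArg (fun w : Circle => (w : ℂ)) (show z ^ k = 1 from hz)
        simpa [chabAux_circle_coe_pow] using this
      · intro hz
        have : ((z ^ k : Circle) : ℂ) = ((1 : Circle) : ℂ) := by
          rw [chabAux_circle_coe_pow]; simpa using hz
        exact Subtype.ext this
    rw [heq]
    exact Set.Finite.preimage (Set.injOn_of_injective fun a b h => Subtype.ext h) h1
  exact h2.to_subtype

/-- Constructor for `ChabautySpace` keeping the type non-unfolded. -/
def ChabautySpace.mk' {G : Type*} [Group G] [TopologicalSpace G] (H : Subgroup G)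
    (h : IsClosed (H : Set G)) : ChabautySpace G := ⟨H, h⟩

lemma chabAux_isOpen_basic1 {G : Type*} [Group G] [TopologicalSpace G] {K : Set G}
    (hK : IsCompact K) :
    IsOpen {H : ChabautySpace G | (H.1 : Set G) ∩ K = ∅} :=
  TopologicalSpace.isOpen_generateFrom_of_mem (Or.inl ⟨K, hK, rfl⟩)

lemma chabAux_isOpen_basic2 {G : Type*} [Group G] [TopologicalSpace G] {U : Set G}
    (hU : IsOpen U) :
    IsOpen {H : ChabautySpace G | ((H.1 : Set G) ∩ U).Nonempty} :=
  TopologicalSpace.isOpen_generateFrom_of_mem (Or.inr ⟨U, hU, rfl⟩)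

lemma chabAux_continuous_into {X : Type*} [TopologicalSpace X] {G : Type*} [Group G]
    [TopologicalSpace G] {f : X → ChabautySpace G}
    (h1 : ∀ K : Set G, IsCompact K → IsOpen (f ⁻¹' {H | (H.1 : Set G) ∩ K = ∅}))
    (h2 : ∀ U : Set G, IsOpen U → IsOpen (f ⁻¹' {H | ((H.1 : Set G) ∩ U).Nonempty})) :
    Continuous f := by
  apply continuous_generateFrom_iff.mpr
  rintro s (⟨K, hK, rfl⟩ | ⟨U, hU, rfl⟩)
  · exact h1 K hK
  · exact h2 U hU

lemma chabAux_image_inter_empty {α β : Type*} (f : α → β) (T : Set α) (K : Set β) :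
    f '' T ∩ K = ∅ ↔ T ∩ f ⁻¹' K = ∅ := by
  rw [Set.inter_comm, Set.inter_comm T]
  exact (chabAux_inter_preimage_empty f K T).symm

lemma chabAux_image_inter_nonempty {α β : Type*} (f : α → β) (T : Set α) (K : Set β) :
    (f '' T ∩ K).Nonempty ↔ (T ∩ f ⁻¹' K).Nonempty := by
  rw [Set.inter_comm, Set.inter_comm T]
  exact (chabAux_inter_preimage_nonempty f K T).symm

/-- In `G_{p,k} = C_{p^∞} × C_k × 𝕋`, every non-discrete closed subgroup is of the form
`D × 𝕋` (the preimage of a subgroup `D ≤ C_{p^∞} × C_k` under the projection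
`π : G_{p,k} → C_{p^∞} × C_k`); the set of such subgroups is closed in `C(G_{p,k})` and is
homeomorphic to `C(C_{p^∞} × C_k)` via `D ↦ π⁻¹(D)`. -/
theorem chabauty_one_dimensional_subgroups (p k : ℕ) (hp : p.Prime) (hk : 1 ≤ k) :
    (∀ H : Subgroup (Prufer p × ↥(circleRoots k) × Circle),
      IsClosed (H : Set (Prufer p × ↥(circleRoots k) × Circle)) → ¬ DiscreteTopology H →
        ∃ D : Subgroup (Prufer p × ↥(circleRoots k)),
          H = D.comap ((MonoidHom.id (Prufer p)).prodMap (MonoidHom.fst _ Circle))) ∧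
    IsClosed {H : ChabautySpace (Prufer p × ↥(circleRoots k) × Circle) |
      ∃ D : Subgroup (Prufer p × ↥(circleRoots k)),
        H.1 = D.comap ((MonoidHom.id (Prufer p)).prodMap (MonoidHom.fst _ Circle))} ∧
    ∃ e : ChabautySpace (Prufer p × ↥(circleRoots k)) ≃ₜ
        {H : ChabautySpace (Prufer p × ↥(circleRoots k) × Circle) |
          ∃ D : Subgroup (Prufer p × ↥(circleRoots k)),
            H.1 = D.comap ((MonoidHom.id (Prufer p)).prodMap (MonoidHom.fst _ Circle))},
      ∀ D : ChabautySpace (Prufer p × ↥(circleRoots k)),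
        ((e D : ChabautySpace (Prufer p × ↥(circleRoots k) × Circle)).1 =
          D.1.comap ((MonoidHom.id (Prufer p)).prodMap (MonoidHom.fst _ Circle))) := by
  classical
  haveI : Finite ↥(circleRoots k) := chabAux_finite_circleRoots k hk
  haveI : DiscreteTopology ↥(circleRoots k) := by infer_instance
  set prj : (Prufer p × ↥(circleRoots k) × Circle) →* (Prufer p × ↥(circleRoots k)) :=
    (MonoidHom.id (Prufer p)).prodMap (MonoidHom.fst (↥(circleRoots k)) Circle) with hpidef
  have hprjfun : ⇑prj = Prod.map (id : Prufer p → Prufer p)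
      (Prod.fst : ↥(circleRoots k) × Circle → ↥(circleRoots k)) := rfl
  have hprjc : Continuous ⇑prj := by rw [hprjfun]; exact continuous_id.prodMap continuous_fst
  have hprjo : IsOpenMap ⇑prj := by rw [hprjfun]; exact IsOpenMap.id.prodMap isOpenMap_fst
  have hprjs : Function.Surjective ⇑prj := by rintro ⟨a, b⟩; exact ⟨(a, b, 1), rfl⟩
  have hker : ∀ x : Prufer p × ↥(circleRoots k) × Circle, prj x = 1 → x.1 = 1 ∧ x.2.1 = 1 :=
    fun x hx => ⟨congrArg Prod.fst hx, congrArg Prod.snd hx⟩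
  have key : ∀ H : Subgroup (Prufer p × ↥(circleRoots k) × Circle),
      (∀ t : Circle, ((1, 1, t) : Prufer p × ↥(circleRoots k) × Circle) ∈ H) →
      H = (H.map prj).comap prj := by
    intro H htop
    refine (Subgroup.comap_map_eq_self ?_).symm
    intro x hx
    rw [MonoidHom.mem_ker] at hx
    obtain ⟨h1, h2⟩ := hker x hx
    have hx' : x = ((1 : Prufer p), (1 : ↥(circleRoots k)), x.2.2) :=
      Prod.ext h1 (Prod.ext h2 rfl)
    rw [hx']
    exact htop x.2.2
  have keymem : ∀ (D : Subgroup (Prufer p × ↥(circleRoots k))) (t : Circle),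
      ((1, 1, t) : Prufer p × ↥(circleRoots k) × Circle) ∈ D.comap prj :=
    fun D t => D.one_mem
  refine ⟨?_, ?_, ?_⟩
  · -- Part 1
    intro H hH hHd
    by_cases htop : ∀ t : Circle, ((1, 1, t) : Prufer p × ↥(circleRoots k) × Circle) ∈ H
    · exact ⟨H.map prj, key H htop⟩
    exfalso
    apply hHd
    set S : Subgroup Circle :=
      { carrier := {t : Circle | ((1, 1, t) : Prufer p × ↥(circleRoots k) × Circle) ∈ H}
        one_mem' := H.one_mem
        mul_mem' := fun {a b} ha hb => by
          have := H.mul_mem ha hb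
          simpa using this
        inv_mem' := fun {a} ha => by
          have := H.inv_mem ha
          simpa using this } with hSdef
    have hScl : IsClosed (S : Set Circle) := by
      have heq : (S : Set Circle) =
          (fun t : Circle => ((1, 1, t) : Prufer p × ↥(circleRoots k) × Circle)) ⁻¹'
            (H : Set (Prufer p × ↥(circleRoots k) × Circle)) := rfl
      rw [heq]
      exact hH.preimage (by fun_prop)
    have hSne : S ≠ ⊤ := by
      intro hcon
      push_neg at htop
      obtain ⟨t0, ht0⟩ := htop
      apply ht0
      show t0 ∈ S
      rw [hcon]; trivial
    have hSfin := chabAux_circle_proper_closed_finite S hScl hSne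
    have hVcl : IsClosed ((S : Set Circle) \ {1}) := (hSfin.subset Set.diff_subset).isClosed
    set V : Set Circle := ((S : Set Circle) \ {1})ᶜ with hVdef
    have hVop : IsOpen V := hVcl.isOpen_compl
    have h1V : (1 : Circle) ∈ V := by simp [hVdef]
    set U : Set (Prufer p × ↥(circleRoots k) × Circle) :=
      {(1 : Prufer p)} ×ˢ ({(1 : ↥(circleRoots k))} ×ˢ V) with hUdef
    have hUop : IsOpen U := (isOpen_discrete _).prod ((isOpen_discrete _).prod hVop)
    have hHU : (H : Set (Prufer p × ↥(circleRoots k) × Circle)) ∩ U = {1} := by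
      ext x
      simp only [Set.mem_inter_iff, Set.mem_singleton_iff, hUdef, Set.mem_prod]
      constructor
      · rintro ⟨hxH, hx1, hx2, hxV⟩
        have hxS : x.2.2 ∈ S := by
          show ((1, 1, x.2.2) : Prufer p × ↥(circleRoots k) × Circle) ∈ H
          rwa [show ((1 : Prufer p), (1 : ↥(circleRoots k)), x.2.2) = x from
            Prod.ext hx1.symm (Prod.ext hx2.symm rfl)]
        have hx3 : x.2.2 = 1 := by
          by_contra hne
          exact hxV ⟨hxS, hne⟩
        exact Prod.ext hx1 (Prod.ext hx2 hx3)
      · rintro rfl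
        exact ⟨H.one_mem, rfl, rfl, h1V⟩
    apply discreteTopology_of_isOpen_singleton_one
    have heq1 : ({1} : Set ↥H) = (Subtype.val : ↥H → _) ⁻¹' U := by
      ext x
      simp only [Set.mem_singleton_iff, Set.mem_preimage]
      constructor
      · rintro rfl
        have h1 : ((1 : ↥H) : Prufer p × ↥(circleRoots k) × Circle) ∈
            (H : Set (Prufer p × ↥(circleRoots k) × Circle)) ∩ U := by rw [hHU]; rfl
        exact h1.2
      · intro hxU
        have hmem : (x : Prufer p × ↥(circleRoots k) × Circle) ∈
            (H : Set (Prufer p × ↥(circleRoots k) × Circle)) ∩ U := ⟨x.2, hxU⟩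
        rw [hHU] at hmem
        exact Subtype.ext hmem
    rw [heq1]
    exact hUop.preimage continuous_subtype_val
  · -- Part 2
    have hset : {H : ChabautySpace (Prufer p × ↥(circleRoots k) × Circle) |
        ∃ D : Subgroup (Prufer p × ↥(circleRoots k)), H.1 = D.comap prj} =
        ⋂ t : Circle, {H : ChabautySpace (Prufer p × ↥(circleRoots k) × Circle) |
          ((1, 1, t) : Prufer p × ↥(circleRoots k) × Circle) ∈ H.1} := by
      ext H
      simp only [Set.mem_iInter, Set.mem_setOf_eq]
      constructor
      · rintro ⟨D, hD⟩ t
        rw [hD]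
        exact keymem D t
      · intro h
        exact ⟨H.1.map prj, key H.1 h⟩
    rw [hset]
    refine isClosed_iInter fun t => ?_
    have heq2 : {H : ChabautySpace (Prufer p × ↥(circleRoots k) × Circle) |
        ((1, 1, t) : Prufer p × ↥(circleRoots k) × Circle) ∈ H.1} =
        {H : ChabautySpace (Prufer p × ↥(circleRoots k) × Circle) |
          ((H.1 : Set (Prufer p × ↥(circleRoots k) × Circle)) ∩
            {((1, 1, t) : Prufer p × ↥(circleRoots k) × Circle)}) = ∅}ᶜ := by
      ext H
      simp [Set.inter_singleton_eq_empty]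
    rw [heq2]
    exact (chabAux_isOpen_basic1 isCompact_singleton).isClosed_compl
  · -- Part 3
    have hclosed : ∀ D : Subgroup (Prufer p × ↥(circleRoots k)),
        IsClosed ((D.comap prj : Subgroup (Prufer p × ↥(circleRoots k) × Circle)) :
          Set (Prufer p × ↥(circleRoots k) × Circle)) := by
      intro D
      rw [Subgroup.coe_comap]
      exact (isClosed_discrete _).preimage hprjc
    refine ⟨{ toFun := fun D => ⟨⟨D.1.comap prj, hclosed D.1⟩, ⟨D.1, rfl⟩⟩,
              invFun := fun H => ⟨H.1.1.map prj, isClosed_discrete _⟩,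
              left_inv := ?_, right_inv := ?_,
              continuous_toFun := ?_, continuous_invFun := ?_ }, fun D => rfl⟩
    · intro D
      exact Subtype.ext (Subgroup.map_comap_eq_self_of_surjective hprjs D.1)
    · rintro ⟨H, D, hD⟩
      apply Subtype.ext
      apply Subtype.ext
      show ((H.1.map prj).comap prj : Subgroup (Prufer p × ↥(circleRoots k) × Circle)) = H.1
      rw [hD, Subgroup.map_comap_eq_self_of_surjective hprjs]
    · have hFc : Continuous (fun D : ChabautySpace (Prufer p × ↥(circleRoots k)) =>
          ChabautySpace.mk' (D.1.comap prj) (hclosed D.1)) := by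
        apply chabAux_continuous_into
        · intro K hK
          suffices h : IsOpen {D : ChabautySpace (Prufer p × ↥(circleRoots k)) |
              (D.1 : Set (Prufer p × ↥(circleRoots k))) ∩ (⇑prj '' K) = ∅} by
            convert h using 1
            ext D
            show (⇑prj ⁻¹' (D.1 : Set (Prufer p × ↥(circleRoots k))) ∩ K = ∅) ↔ _
            exact chabAux_inter_preimage_empty _ _ _
          exact chabAux_isOpen_basic1 (hK.image hprjc)
        · intro U hU
          suffices h : IsOpen {D : ChabautySpace (Prufer p × ↥(circleRoots k)) |
              ((D.1 : Set (Prufer p × ↥(circleRoots k))) ∩ (⇑prj '' U)).Nonempty} by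
            convert h using 1
            ext D
            show (⇑prj ⁻¹' (D.1 : Set (Prufer p × ↥(circleRoots k))) ∩ U).Nonempty ↔ _
            exact chabAux_inter_preimage_nonempty _ _ _
          exact chabAux_isOpen_basic2 (hprjo U hU)
      exact hFc.subtype_mk _
    · have hm : Continuous (fun H : ChabautySpace (Prufer p × ↥(circleRoots k) × Circle) =>
          ChabautySpace.mk' (H.1.map prj) (isClosed_discrete _)) := by
        apply chabAux_continuous_into
        · intro K hK
          have hKpre : IsCompact (⇑prj ⁻¹' K) := by
            have himg : ⇑prj ⁻¹' K =
                (fun q : (Prufer p × ↥(circleRoots k)) × Circle => (q.1.1, q.1.2, q.2)) ''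
                  (K ×ˢ (Set.univ : Set Circle)) := by
              ext ⟨a, b, t⟩
              simp only [Set.mem_preimage, Set.mem_image, Set.mem_prod, Set.mem_univ,
                and_true]
              constructor
              · intro h
                exact ⟨((a, b), t), h, rfl⟩
              · rintro ⟨q, hq, heq⟩
                have hq1 : q.1 = (a, b) :=
                  Prod.ext (congrArg (fun y => y.1) heq) (congrArg (fun y => y.2.1) heq)
                show (a, b) ∈ K
                rw [← hq1]
                exact hq
            rw [himg]
            exact (hK.prod isCompact_univ).image (by fun_prop)
          suffices h : IsOpen {H : ChabautySpace (Prufer p × ↥(circleRoots k) × Circle) |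
              (H.1 : Set (Prufer p × ↥(circleRoots k) × Circle)) ∩ (⇑prj ⁻¹' K) = ∅} by
            convert h using 1
            ext H
            show (⇑prj '' (H.1 : Set (Prufer p × ↥(circleRoots k) × Circle)) ∩ K = ∅) ↔ _
            exact chabAux_image_inter_empty _ _ _
          exact chabAux_isOpen_basic1 hKpre
        · intro U hU
          suffices h : IsOpen {H : ChabautySpace (Prufer p × ↥(circleRoots k) × Circle) |
              ((H.1 : Set (Prufer p × ↥(circleRoots k) × Circle)) ∩ (⇑prj ⁻¹' U)).Nonempty} by
            convert h using 1
            ext H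
            show (⇑prj '' (H.1 : Set (Prufer p × ↥(circleRoots k) × Circle)) ∩ U).Nonempty ↔ _
            exact chabAux_image_inter_nonempty _ _ _
          exact chabAux_isOpen_basic2 (hU.preimage hprjc)
      exact hm.comp continuous_subtype_val
end
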